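/- Assume the event T_α holds for some 0 ≤ α < 1 and λ0 > 0. Let S = S1 ∪ S2 with S1 ∩ S2 = ∅, S1 ≠ ∅, s1 := |S1| and φ(6,S1) > 0, and choose the tuning parameter λ := λ0 · (φ²(6,S1)/s1)^{(1−α)/2}. Then ‖f̂ − f⁰‖_n² + λ‖β̂ − b^S‖₁ ≤ (343/6)·λ0²·(s1/φ²(6,S1))^{α} + (28/3)·λ0·(φ²(6,S1)/s1)^{(1−α)/2}·‖(b^S)_{S2}‖₁ + 7‖ff_S − f⁰‖_n². -/

import Mathlib

open Finset

noncomputable section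

/-- Squared normalized norm: `‖v‖ₙ² = ‖v‖₂²/n`. -/
def nsq (n : ℕ) (v : Fin n → ℝ) : ℝ := (∑ i, v i ^ 2) / n

/-- Normalized norm `‖v‖ₙ`. -/
def nnorm (n : ℕ) (v : Fin n → ℝ) : ℝ := Real.sqrt (nsq n v)

/-- `ℓ₁`-norm of a coefficient vector. -/
def l1 {p : ℕ} (β : Fin p → ℝ) : ℝ := ∑ j, |β j|

/-- `f_β := ∑ⱼ βⱼ ψⱼ`. -/
def fvec {n p : ℕ} (ψ : Fin p → Fin n → ℝ) (β : Fin p → ℝ) : Fin n → ℝ :=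
  fun i => ∑ j, β j * ψ j i

/-- Restriction `β_S` of `β` to an index set `S`. -/
def restr {p : ℕ} (S : Finset (Fin p)) (β : Fin p → ℝ) : Fin p → ℝ :=
  fun j => if j ∈ S then β j else 0

/-- Compatibility constant `φ²(L,S)`. -/
def phiSq {n p : ℕ} (ψ : Fin p → Fin n → ℝ) (L : ℝ) (S : Finset (Fin p)) : ℝ :=
  sInf {x : ℝ | ∃ β : Fin p → ℝ, l1 (restr S β) = 1 ∧ l1 (β - restr S β) ≤ L ∧
    x = S.card * nsq n (fvec ψ (restr S β) - fvec ψ (β - restr S β))}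

/-- Covering number `N(δ, F, ‖·‖ₙ)`. -/
def covN (n : ℕ) (δ : ℝ) (F : Set (Fin n → ℝ)) : ℕ :=
  sInf {N : ℕ | ∃ g : Fin N → (Fin n → ℝ), ∀ f ∈ F, ∃ k, nnorm n (f - g k) ≤ δ}

set_option maxHeartbeats 1000000

lemma l1_nonneg {p : ℕ} (β : Fin p → ℝ) : 0 ≤ l1 β :=
  Finset.sum_nonneg fun _ _ => abs_nonneg _

lemma l1_add_le {p : ℕ} (a b : Fin p → ℝ) : l1 (a + b) ≤ l1 a + l1 b := by
  simp only [l1, Pi.add_apply, ← Finset.sum_add_distrib]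
  exact Finset.sum_le_sum fun i _ => abs_add_le _ _

lemma l1_neg {p : ℕ} (a : Fin p → ℝ) : l1 (-a) = l1 a := by
  simp [l1]

lemma l1_sub_le {p : ℕ} (a b : Fin p → ℝ) : l1 a - l1 b ≤ l1 (a - b) := by
  have h := l1_add_le b (a - b)
  have : b + (a - b) = a := by ring
  rw [this] at h; linarith

lemma l1_split {p : ℕ} (S : Finset (Fin p)) (β : Fin p → ℝ) :
    l1 (restr S β) + l1 (β - restr S β) = l1 β := by
  simp only [l1, restr, Pi.sub_apply, ← Finset.sum_add_distrib]
  refine Finset.sum_congr rfl fun j _ => ?_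
  by_cases h : j ∈ S <;> simp [h]

lemma fvec_sub {n p : ℕ} (ψ : Fin p → Fin n → ℝ) (a b : Fin p → ℝ) :
    fvec ψ (a - b) = fvec ψ a - fvec ψ b := by
  funext i; simp [fvec, sub_mul, Finset.sum_sub_distrib]

lemma nsq_nonneg (n : ℕ) (v : Fin n → ℝ) : 0 ≤ nsq n v :=
  div_nonneg (Finset.sum_nonneg fun _ _ => sq_nonneg _) (Nat.cast_nonneg n)

lemma nnorm_nonneg (n : ℕ) (v : Fin n → ℝ) : 0 ≤ nnorm n v := Real.sqrt_nonneg _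

lemma nnorm_sq (n : ℕ) (v : Fin n → ℝ) : nnorm n v ^ 2 = nsq n v :=
  Real.sq_sqrt (nsq_nonneg n v)


lemma div_le_div_nn {a b c : ℝ} (h : a ≤ b) (hc : 0 ≤ c) : a / c ≤ b / c := by
  exact div_le_div_of_nonneg_right h hc

lemma nnorm_add_le (n : ℕ) (u v : Fin n → ℝ) :
    nnorm n (u + v) ≤ nnorm n u + nnorm n v := by
  have hC2 := Finset.sum_mul_sq_le_sq_mul_sq Finset.univ u v
  set A := ∑ i, u i ^ 2 with hA
  set B := ∑ i, v i ^ 2 with hB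
  set C := ∑ i, u i * v i with hC
  have hA0 : 0 ≤ A := Finset.sum_nonneg fun _ _ => sq_nonneg _
  have hB0 : 0 ≤ B := Finset.sum_nonneg fun _ _ => sq_nonneg _
  have hCS : C ≤ Real.sqrt A * Real.sqrt B := by
    calc C ≤ |C| := le_abs_self C
      _ = Real.sqrt (C ^ 2) := (Real.sqrt_sq_eq_abs C).symm
      _ ≤ Real.sqrt (A * B) := Real.sqrt_le_sqrt hC2
      _ = Real.sqrt A * Real.sqrt B := Real.sqrt_mul hA0 B
  have hsum : (∑ i, (u + v) i ^ 2) = A + 2 * C + B := by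
    simp only [hA, hB, hC, Pi.add_apply, ← Finset.sum_add_distrib, Finset.mul_sum]
    exact Finset.sum_congr rfl fun i _ => by ring
  have hnum : (∑ i, (u + v) i ^ 2) ≤ (Real.sqrt A + Real.sqrt B) ^ 2 := by
    rw [hsum]
    nlinarith [Real.sq_sqrt hA0, Real.sq_sqrt hB0]
  have hle : nsq n (u + v) ≤ (Real.sqrt A + Real.sqrt B) ^ 2 / n :=
    div_le_div_nn hnum (Nat.cast_nonneg n)
  have h1 : nnorm n (u + v) ≤ Real.sqrt ((Real.sqrt A + Real.sqrt B) ^ 2 / n) :=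
    Real.sqrt_le_sqrt hle
  have h2 : Real.sqrt ((Real.sqrt A + Real.sqrt B) ^ 2 / n)
      = Real.sqrt A / Real.sqrt n + Real.sqrt B / Real.sqrt n := by
    rw [Real.sqrt_div (sq_nonneg _), Real.sqrt_sq (by positivity), add_div]
  have h3 : nnorm n u = Real.sqrt A / Real.sqrt n := by
    rw [nnorm, nsq, Real.sqrt_div hA0]
  have h4 : nnorm n v = Real.sqrt B / Real.sqrt n := by
    rw [nnorm, nsq, Real.sqrt_div hB0]
  rw [h3, h4]
  calc nnorm n (u + v) ≤ _ := h1
    _ = _ := h2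

lemma l1_sub_le' {p : ℕ} (a b : Fin p → ℝ) : l1 (a - b) ≤ l1 a + l1 b := by
  rw [sub_eq_add_neg]
  exact (l1_add_le a (-b)).trans (by rw [l1_neg])

lemma nsq_neg_sub (n : ℕ) (a b : Fin n → ℝ) : nsq n (a - b) = nsq n (b - a) := by
  unfold nsq
  congr 1
  exact Finset.sum_congr rfl fun i _ => by simp [Pi.sub_apply]; ring

lemma interp_le {a b c : ℝ} (ha : 0 ≤ a) (hb : 0 ≤ b) (hc0 : 0 ≤ c) (hc1 : c ≤ 1) :
    a ^ (1 - c) * b ^ c ≤ a + b := by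
  have hmax : (0:ℝ) ≤ max a b := le_trans ha (le_max_left a b)
  have h1 : a ^ (1-c) ≤ (max a b) ^ (1-c) :=
    Real.rpow_le_rpow ha (le_max_left a b) (by linarith)
  have h2 : b ^ c ≤ (max a b) ^ c :=
    Real.rpow_le_rpow hb (le_max_right a b) hc0
  calc a ^ (1-c) * b ^ c ≤ (max a b)^(1-c) * (max a b)^c :=
        mul_le_mul h1 h2 (Real.rpow_nonneg hb c) (Real.rpow_nonneg hmax _)
    _ = (max a b) ^ ((1-c)+c) := (Real.rpow_add' hmax (by norm_num)).symm
    _ = max a b := by rw [show (1-c)+c = (1:ℝ) by ring, Real.rpow_one]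
    _ ≤ a + b := max_le (by linarith) (by linarith)

lemma compat_bound {n p : ℕ} (ψ : Fin p → Fin n → ℝ) (S1 : Finset (Fin p)) (δ : Fin p → ℝ)
    (hcase : l1 (δ - restr S1 δ) ≤ 6 * l1 (restr S1 δ)) :
    phiSq ψ 6 S1 * (l1 (restr S1 δ))^2 ≤ S1.card * nsq n (fvec ψ δ) := by
  set d1 := l1 (restr S1 δ) with hd1
  rcases eq_or_lt_of_le (l1_nonneg (restr S1 δ)) with h0 | h0
  · have hz : d1 = 0 := hd1.trans h0.symm
    rw [hz]
    simpa using mul_nonneg (Nat.cast_nonneg S1.card) (nsq_nonneg n (fvec ψ δ))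
  · set β : Fin p → ℝ := fun j => if j ∈ S1 then δ j / d1 else -(δ j) / d1 with hβ
    have hrβ : restr S1 β = fun j => restr S1 δ j / d1 := by
      funext j; by_cases h : j ∈ S1 <;> simp [restr, hβ, h]
    have hl1rβ : l1 (restr S1 β) = 1 := by
      rw [hrβ]
      have habs : ∀ j : Fin p, |restr S1 δ j / d1| = |restr S1 δ j| / d1 := fun j => by
        rw [abs_div, abs_of_pos h0]
      simp only [l1, habs, ← Finset.sum_div]
      exact div_self (ne_of_gt h0)
    have htβ : β - restr S1 β = fun j => if j ∈ S1 then 0 else -(δ j) / d1 := by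
      funext j; by_cases h : j ∈ S1 <;> simp [restr, hβ, h]
    have hl1tβ : l1 (β - restr S1 β) ≤ 6 := by
      rw [htβ]
      have habs : ∀ j : Fin p, |if j ∈ S1 then (0:ℝ) else -(δ j) / d1|
          = |δ j - restr S1 δ j| / d1 := fun j => by
        by_cases h : j ∈ S1 <;> simp [restr, h, abs_div, abs_of_pos h0, abs_neg, abs_of_pos (show (0:ℝ) < d1 from h0)]
      simp only [l1, habs, ← Finset.sum_div]
      rw [div_le_iff₀ h0]
      have : (∑ j, |δ j - restr S1 δ j|) = l1 (δ - restr S1 δ) := by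
        simp [l1, Pi.sub_apply]
      rw [this]; linarith
    have hdiffβ : restr S1 β - (β - restr S1 β) = fun j => δ j / d1 := by
      funext j; by_cases h : j ∈ S1 <;> simp [restr, hβ, h, neg_div]
    have hfv : fvec ψ (restr S1 β) - fvec ψ (β - restr S1 β) = fvec ψ (fun j => δ j / d1) := by
      rw [← fvec_sub, hdiffβ]
    have hfi : ∀ i, fvec ψ (fun j => δ j / d1) i = fvec ψ δ i / d1 := fun i => by
      simp only [fvec, ← Finset.sum_div, div_mul_eq_mul_div]
    have hnsq : nsq n (fvec ψ (fun j => δ j / d1)) = nsq n (fvec ψ δ) / d1^2 := by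
      unfold nsq
      simp only [hfi, div_pow, ← Finset.sum_div]
      ring
    have hbdd : BddBelow {x : ℝ | ∃ β : Fin p → ℝ, l1 (restr S1 β) = 1 ∧
        l1 (β - restr S1 β) ≤ 6 ∧
        x = S1.card * nsq n (fvec ψ (restr S1 β) - fvec ψ (β - restr S1 β))} := by
      refine ⟨0, fun x hx => ?_⟩
      obtain ⟨β', _, _, h3⟩ := hx
      rw [h3]
      exact mul_nonneg (Nat.cast_nonneg _) (nsq_nonneg _ _)
    have hmem : (S1.card : ℝ) * nsq n (fvec ψ (restr S1 β) - fvec ψ (β - restr S1 β)) ∈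
        {x : ℝ | ∃ β : Fin p → ℝ, l1 (restr S1 β) = 1 ∧ l1 (β - restr S1 β) ≤ 6 ∧
        x = S1.card * nsq n (fvec ψ (restr S1 β) - fvec ψ (β - restr S1 β))} :=
      ⟨β, hl1rβ, hl1tβ, rfl⟩
    have hle : phiSq ψ 6 S1 ≤ S1.card * (nsq n (fvec ψ δ) / d1^2) := by
      have h := csInf_le hbdd hmem
      rw [hfv, hnsq] at h
      exact h
    rw [← mul_div_assoc] at hle
    rw [← le_div_iff₀ (by positivity : (0:ℝ) < d1^2)]
    exact hle

theorem stmt3 {n p : ℕ} (hn : 1 ≤ n) (hp : 1 ≤ p)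
    (ψ : Fin p → Fin n → ℝ) (hψ : ∀ j, ∑ i, (ψ j i) ^ 2 ≤ (n : ℝ))
    (β0 : Fin p → ℝ) (ε : Fin n → ℝ)
    (α lam0 lam : ℝ) (hα0 : 0 ≤ α) (hα1 : α < 1) (hlam0 : 0 < lam0)
    (S S1 S2 : Finset (Fin p)) (hS : S = S1 ∪ S2) (hdisj : Disjoint S1 S2)
    (hS1ne : S1.Nonempty) (hphi : 0 < phiSq ψ 6 S1)
    (hlam : lam = lam0 * (phiSq ψ 6 S1 / S1.card) ^ ((1 - α) / 2))
    (hT : ∀ β : Fin p → ℝ,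
      4 * |∑ i, ε i * fvec ψ β i| / n ≤
        lam0 * nnorm n (fvec ψ β) ^ (1 - α) * l1 β ^ α)
    (hatβ : Fin p → ℝ)
    (hmin : ∀ β : Fin p → ℝ,
      (∑ i, (fvec ψ β0 i + ε i - fvec ψ hatβ i) ^ 2) / n + lam * l1 hatβ ≤
        (∑ i, (fvec ψ β0 i + ε i - fvec ψ β i) ^ 2) / n + lam * l1 β)
    (bS : Fin p → ℝ) (hbS_supp : ∀ j, j ∉ S → bS j = 0)
    (hbS_proj : ∀ b : Fin p → ℝ, (∀ j, j ∉ S → b j = 0) →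
      nsq n (fvec ψ bS - fvec ψ β0) ≤ nsq n (fvec ψ b - fvec ψ β0))
 :
    nsq n (fvec ψ hatβ - fvec ψ β0) + lam * l1 (hatβ - bS) ≤
      (343 / 6) * lam0 ^ 2 * ((S1.card : ℝ) / phiSq ψ 6 S1) ^ α
        + (28 / 3) * lam0 * (phiSq ψ 6 S1 / S1.card) ^ ((1 - α) / 2) * l1 (restr S2 bS)
        + 7 * nsq n (fvec ψ bS - fvec ψ β0) := by
  have hn0 : (0:ℝ) < n := by exact_mod_cast hn
  set φ2 := phiSq ψ 6 S1 with hφ2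
  have hs1 : (1:ℝ) ≤ S1.card := by exact_mod_cast hS1ne.card_pos
  set s : ℝ := (S1.card : ℝ) with hsdef
  have hs0 : (0:ℝ) < s := by linarith
  have hx0 : (0:ℝ) < s / φ2 := div_pos hs0 hphi
  set δ : Fin p → ℝ := hatβ - bS with hδ
  set G := nsq n (fvec ψ hatβ - fvec ψ β0) with hG
  set D := nsq n (fvec ψ bS - fvec ψ β0) with hD
  set B := l1 (restr S2 bS) with hBdef
  set d1 := l1 (restr S1 δ) with hd1def
  set d2 := l1 (δ - restr S1 δ) with hd2def
  set N := nnorm n (fvec ψ δ) with hNdef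
  set g := nnorm n (fvec ψ hatβ - fvec ψ β0) with hgdef
  set d := nnorm n (fvec ψ bS - fvec ψ β0) with hddef
  have hg2 : g ^ 2 = G := nnorm_sq _ _
  have hdsq : d ^ 2 = D := nnorm_sq _ _
  have hG0 : 0 ≤ G := nsq_nonneg _ _
  have hD0 : 0 ≤ D := nsq_nonneg _ _
  have hg0 : 0 ≤ g := nnorm_nonneg _ _
  have hd0 : 0 ≤ d := nnorm_nonneg _ _
  have hN0 : 0 ≤ N := nnorm_nonneg _ _
  have hd10 : 0 ≤ d1 := l1_nonneg _
  have hd20 : 0 ≤ d2 := l1_nonneg _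
  have hB0 : 0 ≤ B := l1_nonneg _
  have hLδ : l1 δ = d1 + d2 := (l1_split S1 δ).symm
  -- positivity of lam
  have hepos : (0:ℝ) < (φ2 / s) ^ ((1 - α) / 2) :=
    Real.rpow_pos_of_pos (div_pos hphi hs0) _
  have hlampos : 0 < lam := by rw [hlam]; exact mul_pos hlam0 hepos
  -- lam0 in terms of lam
  have hmulone : (φ2 / s) ^ ((1 - α) / 2) * (s / φ2) ^ ((1 - α) / 2) = 1 := by
    rw [← Real.mul_rpow (le_of_lt (div_pos hphi hs0)) (le_of_lt hx0)]
    rw [show φ2 / s * (s / φ2) = 1 by field_simp, Real.one_rpow]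
  have hlam0eq : lam0 = lam * (s / φ2) ^ ((1 - α) / 2) := by
    rw [hlam, mul_assoc, hmulone, mul_one]
  -- c' and its properties
  set c' : ℝ := (s / φ2) ^ ((1:ℝ)/2) with hc'def
  have hc'pos : 0 < c' := Real.rpow_pos_of_pos hx0 _
  have hc'sq : c' ^ 2 = s / φ2 := by
    rw [hc'def, ← Real.rpow_natCast ((s / φ2) ^ ((1:ℝ)/2)) 2,
      ← Real.rpow_mul (le_of_lt hx0)]
    norm_num
  have hc'e : (s / φ2) ^ ((1 - α) / 2) = c' ^ (1 - α) := by
    rw [hc'def, ← Real.rpow_mul (le_of_lt hx0)]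
    ring_nf
  -- basic inequality
  set X := ∑ i, ε i * fvec ψ δ i with hXdef
  have hbasic : G + lam * l1 hatβ ≤ 2 * X / n + D + lam * l1 bS := by
    have hexp : ∀ w : Fin p → ℝ,
        (∑ i, (fvec ψ β0 i + ε i - fvec ψ w i) ^ 2) =
          (∑ i, (fvec ψ w i - fvec ψ β0 i) ^ 2)
          - 2 * (∑ i, ε i * (fvec ψ w i - fvec ψ β0 i)) + ∑ i, ε i ^ 2 := by
      intro w
      rw [Finset.mul_sum, ← Finset.sum_sub_distrib, ← Finset.sum_add_distrib]
      exact Finset.sum_congr rfl fun i _ => by ring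
    have hGsum : G = (∑ i, (fvec ψ hatβ i - fvec ψ β0 i) ^ 2) / n := by
      rw [hG, nsq]
      simp [Pi.sub_apply]
    have hDsum : D = (∑ i, (fvec ψ bS i - fvec ψ β0 i) ^ 2) / n := by
      rw [hD, nsq]
      simp [Pi.sub_apply]
    have hXeq : (∑ i, ε i * (fvec ψ hatβ i - fvec ψ β0 i))
        - (∑ i, ε i * (fvec ψ bS i - fvec ψ β0 i)) = X := by
      rw [hXdef, ← Finset.sum_sub_distrib]
      refine Finset.sum_congr rfl fun i _ => ?_
      rw [hδ, fvec_sub]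
      simp [Pi.sub_apply]
      ring
    have emin := hmin bS
    rw [hexp hatβ, hexp bS] at emin
    set SG := ∑ i, (fvec ψ hatβ i - fvec ψ β0 i) ^ 2
    set SD := ∑ i, (fvec ψ bS i - fvec ψ β0 i) ^ 2
    set X1 := ∑ i, ε i * (fvec ψ hatβ i - fvec ψ β0 i)
    set X2 := ∑ i, ε i * (fvec ψ bS i - fvec ψ β0 i)
    set SE := ∑ i, ε i ^ 2
    have e1 : (SG - 2 * X1 + SE) / n = SG/n - 2*X1/n + SE/n := by ring
    have e2 : (SD - 2 * X2 + SE) / n = SD/n - 2*X2/n + SE/n := by ring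
    rw [e1, e2] at emin
    have e3 : 2 * X / n = 2*X1/n - 2*X2/n := by
      rw [div_sub_div_same]
      congr 1
      rw [← hXeq]; ring
    rw [hGsum, hDsum, e3]
    linarith
  -- empirical process bound
  have hXbound : 2 * X / n ≤ (lam / 2) * (c' * N) + (lam / 2) * l1 δ := by
    have hTd := hT δ
    have habs : 2 * X / n ≤ (4 * |X| / n) / 2 := by
      rw [show (4 * |X| / (n:ℝ)) / 2 = 2 * |X| / (n:ℝ) by ring]
      have h2 : 2 * X ≤ 2 * |X| := by linarith [le_abs_self X]
      exact div_le_div_of_nonneg_right h2 hn0.le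
    have hinterp : lam0 * N ^ (1 - α) * l1 δ ^ α ≤ lam * (c' * N) + lam * l1 δ := by
      rw [hlam0eq]
      have hrw : lam * (s / φ2) ^ ((1 - α) / 2) * N ^ (1 - α) * l1 δ ^ α
          = lam * ((c' * N) ^ (1 - α) * l1 δ ^ α) := by
        rw [hc'e, Real.mul_rpow hc'pos.le hN0]
        ring
      rw [hrw]
      have h2 : (c' * N) ^ (1 - α) * l1 δ ^ α ≤ c' * N + l1 δ :=
        interp_le (mul_nonneg hc'pos.le hN0) (l1_nonneg δ) hα0 hα1.le
      calc lam * ((c' * N) ^ (1 - α) * l1 δ ^ α) ≤ lam * (c' * N + l1 δ) :=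
            mul_le_mul_of_nonneg_left h2 hlampos.le
        _ = lam * (c' * N) + lam * l1 δ := by ring
    calc 2 * X / n ≤ (4 * |X| / n) / 2 := habs
      _ ≤ (lam0 * N ^ (1 - α) * l1 δ ^ α) / 2 := by linarith [hTd]
      _ ≤ (lam * (c' * N) + lam * l1 δ) / 2 := by linarith
      _ = (lam / 2) * (c' * N) + (lam / 2) * l1 δ := by ring
  -- l1 comparison
  have hl1cmp : l1 bS - l1 hatβ ≤ d1 - d2 + 2 * B := by
    have hr : restr S1 hatβ - restr S1 bS = restr S1 δ := by
      funext j; by_cases h : j ∈ S1 <;> simp [restr, hδ, h, Pi.sub_apply]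
    have htail : (hatβ - restr S1 hatβ) - (bS - restr S1 bS) = δ - restr S1 δ := by
      funext j
      by_cases h : j ∈ S1 <;> simp [restr, hδ, h, Pi.sub_apply]
    have hbs2 : bS - restr S1 bS = restr S2 bS := by
      funext j
      by_cases h1 : j ∈ S1
      · have h2 : j ∉ S2 := Finset.disjoint_left.mp hdisj h1
        simp [restr, h1, h2, Pi.sub_apply]
      · by_cases h2 : j ∈ S2
        · simp [restr, h1, h2, Pi.sub_apply]
        · have : j ∉ S := by rw [hS]; simp [h1, h2]
          simp [restr, h1, h2, Pi.sub_apply, hbS_supp j this]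
    have hsplit1 : l1 bS = l1 (restr S1 bS) + B := by
      rw [hBdef, ← hbs2, l1_split]
    have hsplit2 : l1 hatβ = l1 (restr S1 hatβ) + l1 (hatβ - restr S1 hatβ) :=
      (l1_split S1 hatβ).symm
    have i1 : l1 (restr S1 bS) - l1 (restr S1 hatβ) ≤ d1 := by
      have h := l1_sub_le (restr S1 bS) (restr S1 hatβ)
      have : restr S1 bS - restr S1 hatβ = -(restr S1 δ) := by
        rw [← hr]; ring
      rw [this, l1_neg] at h
      exact h
    have i2 : d2 - B ≤ l1 (hatβ - restr S1 hatβ) := by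
      have h := l1_sub_le' (hatβ - restr S1 hatβ) (bS - restr S1 bS)
      rw [htail, hbs2] at h
      rw [hd2def, hBdef]
      linarith
    linarith
  -- master inequality
  have hM : G + lam * d2 ≤ (lam/2) * (c' * N) + (lam/2) * (d1 + d2) + D
      + lam * d1 + 2 * lam * B := by
    have h1 : lam * (l1 bS - l1 hatβ) ≤ lam * (d1 - d2 + 2*B) :=
      mul_le_mul_of_nonneg_left hl1cmp hlampos.le
    rw [hLδ] at hXbound
    linarith [hbasic, hXbound, h1]
  -- triangle inequality: N ≤ g + d
  have hNgd : N ≤ g + d := by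
    have hsum : fvec ψ δ = (fvec ψ hatβ - fvec ψ β0) + (fvec ψ β0 - fvec ψ bS) := by
      rw [hδ, fvec_sub]; ring
    have h := nnorm_add_le n (fvec ψ hatβ - fvec ψ β0) (fvec ψ β0 - fvec ψ bS)
    rw [← hsum] at h
    have hneg : nnorm n (fvec ψ β0 - fvec ψ bS) = d := by
      rw [hddef, nnorm, nnorm, nsq_neg_sub]
    rw [hneg] at h
    exact h
  have hlB : 0 ≤ lam * B := mul_nonneg hlampos.le hB0
  -- the two cases
  have hmain : G + lam * (d1 + d2) ≤ (25/2) * lam^2 * (s/φ2) + (28/3) * (lam * B) + 7 * D := by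
    by_cases hcase : d2 ≤ 6 * d1
    · -- compatibility case
      have hcomp := compat_bound ψ S1 δ (by rw [← hd1def, ← hd2def]; linarith)
      rw [← hd1def, ← hsdef, ← hφ2] at hcomp
      have hNsq : N ^ 2 = nsq n (fvec ψ δ) := nnorm_sq _ _
      have hd1le : d1 ≤ c' * N := by
        have hsq : d1 ^ 2 ≤ (c' * N) ^ 2 := by
          rw [mul_pow, hc'sq]
          rw [div_mul_eq_mul_div, le_div_iff₀ hphi]
          rw [hNsq]
          linarith [hcomp]
        calc d1 = Real.sqrt (d1 ^ 2) := (Real.sqrt_sq hd10).symm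
          _ ≤ Real.sqrt ((c' * N) ^ 2) := Real.sqrt_le_sqrt hsq
          _ = c' * N := Real.sqrt_sq (mul_nonneg hc'pos.le hN0)
      have h1 : lam * d1 ≤ lam * (c' * N) := mul_le_mul_of_nonneg_left hd1le hlampos.le
      have h2 : lam * (c' * N) ≤ lam * (c' * g) + lam * (c' * d) := by
        have : lam * (c' * N) ≤ lam * (c' * (g + d)) := by
          apply mul_le_mul_of_nonneg_left _ hlampos.le
          exact mul_le_mul_of_nonneg_left hNgd hc'pos.le
        linarith only [this]
      have q1 : (5/2) * (lam * (c' * g)) ≤ (1/2) * g^2 + (25/8) * (lam^2 * c'^2) := by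
        linarith only [sq_nonneg (g - (5/2) * (lam * c'))]
      have q2 : (5/2) * (lam * (c' * d)) ≤ (1/2) * d^2 + (25/8) * (lam^2 * c'^2) := by
        linarith only [sq_nonneg (d - (5/2) * (lam * c'))]
      rw [← hc'sq]
      linarith only [hM, h1, h2, q1, q2, hg2, hdsq, hlB, hD0]
    · -- sparsity-dominated case
      push_neg at hcase
      have hd1le : d1 ≤ d2 / 6 := by linarith
      have h1 : lam * d1 ≤ lam * (d2 / 6) := mul_le_mul_of_nonneg_left hd1le hlampos.le
      have h2 : lam * (c' * N) ≤ lam * (c' * g) + lam * (c' * d) := by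
        have : lam * (c' * N) ≤ lam * (c' * (g + d)) := by
          apply mul_le_mul_of_nonneg_left _ hlampos.le
          exact mul_le_mul_of_nonneg_left hNgd hc'pos.le
        linarith only [this]
      -- from hM: G + (lam/4)*d2 ≤ (lam/2)*(c'*N) + D + 2*lam*B
      have hR : G + (lam/4) * d2 ≤ (lam/2) * (c' * N) + D + 2 * lam * B := by
        linarith [hM, h1]
      have q1 : (7/3) * (lam * (c' * g)) ≤ (11/3) * g^2 + (49/132) * (lam^2 * c'^2) := by
        linarith only [sq_nonneg (22 * g - 7 * (lam * c'))]
      have q2 : (7/3) * (lam * (c' * d)) ≤ (7/3) * d^2 + (7/12) * (lam^2 * c'^2) := by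
        linarith only [sq_nonneg (2 * d - lam * c')]
      rw [← hc'sq]
      linarith only [hR, h1, h2, q1, q2, hg2, hdsq, hlB, hD0, hG0, sq_nonneg (lam * c')]
  -- conversion to the stated bound
  have hid : lam0 ^ 2 * (s / φ2) ^ α = lam ^ 2 * (s / φ2) := by
    rw [hlam0eq, mul_pow, ← Real.rpow_natCast ((s / φ2) ^ ((1 - α)/2)) 2,
      ← Real.rpow_mul hx0.le]
    rw [mul_assoc, ← Real.rpow_add hx0]
    rw [show (1 - α) / 2 * (2:ℕ) + α = 1 by push_cast; ring, Real.rpow_one]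
  have hterm2 : (28 / 3) * lam0 * (φ2 / s) ^ ((1 - α) / 2) * B = (28/3) * (lam * B) := by
    rw [hlam]; ring
  have hrpow0 : 0 ≤ lam0 ^ 2 * (s / φ2) ^ α := mul_nonneg (sq_nonneg _) (Real.rpow_nonneg hx0.le _)
  rw [hLδ]
  calc G + lam * (d1 + d2)
      ≤ (25/2) * lam^2 * (s/φ2) + (28/3) * (lam * B) + 7 * D := hmain
    _ ≤ (343 / 6) * lam0 ^ 2 * (s / φ2) ^ α + (28 / 3) * lam0 * (φ2 / s) ^ ((1 - α) / 2) * B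
        + 7 * D := by
        rw [hterm2]
        linarith [hid, hrpow0]
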